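/- Let k ≥ 50 and let γ be the dominant root of x^k - 2x^{k-1} - ... - x - 1, and let φ = (1+√5)/2. If n is an integer with 1 < n < φ^{k/2}, then |(2γ - 2)γ^n - 2φ^{2n+1}| < 4φ^{2n}/φ^{k/2}. -/

import Mathlib

noncomputable def φ : ℝ := (1 + Real.sqrt 5) / 2

def IsDomRoot (k : ℕ) (γ : ℝ) : Prop :=
  1 < γ ∧ γ ^ k = 2 * γ ^ (k - 1) + ∑ i ∈ Finset.range (k - 1), γ ^ i

lemma phi_sq : φ ^ 2 = φ + 1 := by
  have h5 : Real.sqrt 5 ^ 2 = 5 := Real.sq_sqrt (by norm_num)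
  unfold φ
  linear_combination h5 / 4

lemma phi_gt_one : 1 < φ := by
  have h5 : Real.sqrt 5 ^ 2 = 5 := Real.sq_sqrt (by norm_num)
  have h5n : 0 ≤ Real.sqrt 5 := Real.sqrt_nonneg 5
  unfold φ
  nlinarith [h5, h5n]

lemma phi_lt_two : φ < 2 := by
  have h5 : Real.sqrt 5 ^ 2 = 5 := Real.sq_sqrt (by norm_num)
  have h5n : 0 ≤ Real.sqrt 5 := Real.sqrt_nonneg 5
  unfold φ
  nlinarith [h5, h5n]

set_option maxHeartbeats 1000000 in
theorem dominant_root_pow_approx (k : ℕ) (hk : 50 ≤ k) (γ : ℝ) (hγ : IsDomRoot k γ)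
    (n : ℕ) (hn : 1 < n) (hnk : (n : ℝ) < φ ^ ((k : ℝ) / 2)) :
    |(2 * γ - 2) * γ ^ n - 2 * φ ^ (2 * n + 1)| < 4 * φ ^ (2 * n) / φ ^ ((k : ℝ) / 2) := by
  obtain ⟨hγ1, heq⟩ := hγ
  have hφ1 : 1 < φ := phi_gt_one
  have hφ2 : φ < 2 := phi_lt_two
  have hφsq : φ ^ 2 = φ + 1 := phi_sq
  have hφ0 : (0:ℝ) < φ := by linarith
  have hφ1' : (0:ℝ) < φ + 1 := by linarith
  have hγ0 : (0:ℝ) < γ := by linarith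
  set m := k - 1 with hm
  have hkm : k = m + 1 := by omega
  rw [hkm] at heq
  set Q := φ ^ ((k : ℝ) / 2) with hQ
  have hQpos : 0 < Q := Real.rpow_pos_of_pos hφ0 _
  -- γ > 2
  have hγm : 0 < γ ^ m := pow_pos hγ0 m
  have hS : 0 < ∑ i ∈ Finset.range m, γ ^ i :=
    Finset.sum_pos (fun i _ => pow_pos hγ0 i) (Finset.nonempty_range_iff.mpr (by omega))
  have hpow : γ ^ (m + 1) = γ ^ m * γ := pow_succ γ m
  have hγ2 : 2 < γ := by
    by_contra h
    push_neg at h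
    have h2 : γ ^ m * γ ≤ γ ^ m * 2 := mul_le_mul_of_nonneg_left h hγm.le
    rw [← hpow] at h2
    linarith
  -- key identity
  have hgs : (∑ i ∈ Finset.range m, γ ^ i) * (γ - 1) = γ ^ m - 1 := geom_sum_mul γ m
  have hid : γ ^ m * (γ ^ 2 - 3 * γ + 1) = -1 := by
    linear_combination (γ - 1) * heq + hgs - (γ - 1) * hpow
  have hneg2 : γ ^ 2 - 3 * γ + 1 < 0 := by nlinarith [hid, hγm]
  have hγφ : γ < φ + 1 := by
    by_contra h
    push_neg at h
    nlinarith [hneg2, hγ2, hφ1]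
  have hd0 : 0 < φ + 1 - γ := by linarith
  -- hkey
  have hkey : (φ + 1 - γ) * (γ ^ m * (γ + φ - 2)) = 1 := by
    linear_combination (-1 : ℝ) * hid + γ ^ m * hφsq
  have hφm : φ ^ (m + 1) < γ ^ m * (γ + φ - 2) := by
    have h1 : φ ^ m < γ ^ m := by
      apply pow_lt_pow_left₀ (by linarith) hφ0.le (by omega)
    have h2 : φ < γ + φ - 2 := by linarith
    calc φ ^ (m + 1) = φ ^ m * φ := pow_succ φ m
      _ < γ ^ m * (γ + φ - 2) := by
          apply mul_lt_mul'' h1 h2 (pow_nonneg hφ0.le m) hφ0.le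
  -- Q facts
  have hQsq : Q ^ 2 = φ ^ k := by
    rw [hQ, sq, ← Real.rpow_add hφ0]
    rw [show (k:ℝ)/2 + (k:ℝ)/2 = (k:ℝ) by ring, Real.rpow_natCast]
  have hQ4 : φ ^ 4 < Q := by
    rw [hQ, ← Real.rpow_natCast φ 4]
    apply (Real.rpow_lt_rpow_left_iff hφ1).mpr
    have : (50:ℝ) ≤ (k:ℝ) := by exact_mod_cast hk
    norm_num
    linarith
  have hφ4 : φ ^ 4 = 3 * φ + 2 := by linear_combination (φ^2 + φ + 2) * hφsq
  have hQ4' : 3 * φ + 2 < Q := by rw [← hφ4]; exact hQ4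
  have F6 : φ + 1 < (2 - φ) * Q := by
    nlinarith [mul_pos (by linarith : (0:ℝ) < 2 - φ) (by linarith : (0:ℝ) < Q - (3*φ+2)), hφsq]
  -- gap bound: (φ+1-γ) * Q^2 < φ+1
  have hgap' : (φ + 1 - γ) * Q ^ 2 < φ + 1 := by
    rw [hQsq, hkm]
    nlinarith [hkey, mul_pos hd0 (by linarith [hφm] : (0:ℝ) < γ ^ m * (γ + φ - 2) - φ ^ (m+1))]
  -- Bernoulli lower bound
  have hxle : (φ + 1 - γ) / (φ + 1) ≤ 2 := by
    rw [div_le_iff₀ hφ1']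
    linarith
  have hm2 : (-2 : ℝ) ≤ -((φ + 1 - γ) / (φ + 1)) := by linarith
  have hbern : 1 + (n:ℝ) * (-((φ + 1 - γ) / (φ + 1))) ≤ (1 + -((φ + 1 - γ) / (φ + 1))) ^ n :=
    one_add_mul_le_pow hm2 n
  have hx1 : (φ + 1) * (1 + -((φ + 1 - γ) / (φ + 1))) = γ := by
    field_simp
    ring
  have hAeq : (φ + 1) ^ n * (1 + -((φ + 1 - γ) / (φ + 1))) ^ n = γ ^ n := by
    rw [← mul_pow, hx1]
  have h2 : (φ + 1) ^ n * (1 + (n:ℝ) * (-((φ + 1 - γ) / (φ + 1)))) ≤ γ ^ n := by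
    calc (φ + 1) ^ n * (1 + (n:ℝ) * (-((φ + 1 - γ) / (φ + 1))))
        ≤ (φ + 1) ^ n * (1 + -((φ + 1 - γ) / (φ + 1))) ^ n :=
          mul_le_mul_of_nonneg_left hbern (pow_nonneg hφ1'.le n)
      _ = γ ^ n := hAeq
  have hlow' : (φ + 1) ^ n * ((φ + 1) - (n:ℝ) * (φ + 1 - γ)) ≤ γ ^ n * (φ + 1) := by
    have he : (φ + 1) ^ n * (1 + (n:ℝ) * (-((φ + 1 - γ) / (φ + 1)))) * (φ + 1)
        = (φ + 1) ^ n * ((φ + 1) - (n:ℝ) * (φ + 1 - γ)) := by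
      field_simp
      ring
    calc (φ + 1) ^ n * ((φ + 1) - (n:ℝ) * (φ + 1 - γ))
        = (φ + 1) ^ n * (1 + (n:ℝ) * (-((φ + 1 - γ) / (φ + 1)))) * (φ + 1) := he.symm
      _ ≤ γ ^ n * (φ + 1) := mul_le_mul_of_nonneg_right h2 hφ1'.le
  have hB1 : ((φ + 1) ^ n - γ ^ n) * (φ + 1) ≤ (φ + 1) ^ n * ((n:ℝ) * (φ + 1 - γ)) := by
    linarith [hlow']
  -- positivity facts
  have hA : (0:ℝ) < (φ + 1) ^ n := pow_pos hφ1' n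
  have hXA : γ ^ n ≤ (φ + 1) ^ n := pow_le_pow_left₀ hγ0.le hγφ.le n
  have hX0 : (0:ℝ) < γ ^ n := pow_pos hγ0 n
  -- assemble
  have hnd : (n:ℝ) * ((φ + 1 - γ) * Q ^ 2) < Q * (φ + 1) :=
    mul_lt_mul'' hnk hgap' (Nat.cast_nonneg n) (mul_nonneg hd0.le (sq_nonneg Q))
  have M1 : 2 * (γ - 1) * Q ^ 2 * (((φ + 1) ^ n - γ ^ n) * (φ + 1))
      ≤ 2 * (γ - 1) * Q ^ 2 * ((φ + 1) ^ n * ((n:ℝ) * (φ + 1 - γ))) :=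
    mul_le_mul_of_nonneg_left hB1
      (mul_nonneg (by linarith : (0:ℝ) ≤ 2 * (γ - 1)) (sq_nonneg Q))
  have M2 : 2 * (γ - 1) * (Q ^ 2 * ((φ + 1) ^ n * ((n:ℝ) * (φ + 1 - γ))))
      ≤ 2 * φ * (Q ^ 2 * ((φ + 1) ^ n * ((n:ℝ) * (φ + 1 - γ)))) := by
    apply mul_le_mul_of_nonneg_right (by linarith : 2 * (γ - 1) ≤ 2 * φ)
    exact mul_nonneg (sq_nonneg Q)
      (mul_nonneg hA.le (mul_nonneg (Nat.cast_nonneg n) hd0.le))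
  have M3 : 2 * φ * (φ + 1) ^ n * ((n:ℝ) * ((φ + 1 - γ) * Q ^ 2))
      < 2 * φ * (φ + 1) ^ n * (Q * (φ + 1)) :=
    mul_lt_mul_of_pos_left hnd (by positivity)
  have M4 : 2 * (φ + 1) ^ n * (φ + 1) * ((φ + 1 - γ) * Q ^ 2)
      < 2 * (φ + 1) ^ n * (φ + 1) * (φ + 1) :=
    mul_lt_mul_of_pos_left hgap' (by positivity)
  have M5 : 2 * (φ + 1) ^ n * (φ + 1) * (φ + 1)
      < 2 * (φ + 1) ^ n * (φ + 1) * ((2 - φ) * Q) :=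
    mul_lt_mul_of_pos_left F6 (by positivity)
  have D1 : 2 * (γ - 1) * Q ^ 2 * (((φ + 1) ^ n - γ ^ n) * (φ + 1))
      < 2 * φ * (φ + 1) ^ n * (Q * (φ + 1)) := by
    calc 2 * (γ - 1) * Q ^ 2 * (((φ + 1) ^ n - γ ^ n) * (φ + 1))
        ≤ 2 * (γ - 1) * Q ^ 2 * ((φ + 1) ^ n * ((n:ℝ) * (φ + 1 - γ))) := M1
      _ = 2 * (γ - 1) * (Q ^ 2 * ((φ + 1) ^ n * ((n:ℝ) * (φ + 1 - γ)))) := by ring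
      _ ≤ 2 * φ * (Q ^ 2 * ((φ + 1) ^ n * ((n:ℝ) * (φ + 1 - γ)))) := M2
      _ = 2 * φ * (φ + 1) ^ n * ((n:ℝ) * ((φ + 1 - γ) * Q ^ 2)) := by ring
      _ < 2 * φ * (φ + 1) ^ n * (Q * (φ + 1)) := M3
  have D2 : 2 * (φ + 1) ^ n * (φ + 1) * ((φ + 1 - γ) * Q ^ 2)
      < 2 * (φ + 1) ^ n * (φ + 1) * ((2 - φ) * Q) := M4.trans M5
  have Hbig : (2 * φ * (φ + 1) ^ n - (2 * γ - 2) * γ ^ n) * Q ^ 2 * (φ + 1)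
      < 4 * (φ + 1) ^ n * (Q * (φ + 1)) := by
    calc (2 * φ * (φ + 1) ^ n - (2 * γ - 2) * γ ^ n) * Q ^ 2 * (φ + 1)
        = 2 * (γ - 1) * Q ^ 2 * (((φ + 1) ^ n - γ ^ n) * (φ + 1))
          + 2 * (φ + 1) ^ n * (φ + 1) * ((φ + 1 - γ) * Q ^ 2) := by ring
      _ < 2 * φ * (φ + 1) ^ n * (Q * (φ + 1))
          + 2 * (φ + 1) ^ n * (φ + 1) * ((2 - φ) * Q) := add_lt_add_of_lt_of_lt D1 D2
      _ = 4 * (φ + 1) ^ n * (Q * (φ + 1)) := by ring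
  -- rewrite the goal
  have hp2n : φ ^ (2 * n) = (φ + 1) ^ n := by rw [pow_mul, hφsq]
  have hp2n1 : φ ^ (2 * n + 1) = (φ + 1) ^ n * φ := by rw [pow_succ, hp2n]
  rw [hp2n, hp2n1]
  have habs : (2 * γ - 2) * γ ^ n - 2 * ((φ + 1) ^ n * φ) < 0 := by
    have e1 : (2 * γ - 2) * γ ^ n ≤ (2 * γ - 2) * (φ + 1) ^ n :=
      mul_le_mul_of_nonneg_left hXA (by linarith)
    have e2 : (2 * γ - 2) * (φ + 1) ^ n < 2 * φ * (φ + 1) ^ n :=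
      mul_lt_mul_of_pos_right (by linarith) hA
    have := e1.trans_lt e2
    linarith
  rw [abs_of_neg habs, lt_div_iff₀ hQpos]
  have hpos : (0:ℝ) < Q * (φ + 1) := by positivity
  rw [← mul_lt_mul_iff_left₀ hpos]
  calc -((2 * γ - 2) * γ ^ n - 2 * ((φ + 1) ^ n * φ)) * Q * (Q * (φ + 1))
      = (2 * φ * (φ + 1) ^ n - (2 * γ - 2) * γ ^ n) * Q ^ 2 * (φ + 1) := by ring
    _ < 4 * (φ + 1) ^ n * (Q * (φ + 1)) := Hbig
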